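/- For every n ≥ 1, the total number of occurrences of the pattern 12 over all 123-avoiding permutations of length n satisfies ν_12(Av_n(123)) + binom(2n−1, n) = 4^{n−1}, i.e. ν_12(Av_n(123)) = 4^{n−1} − binom(2n−1, n). -/

import Mathlib

open Finset

/-- The number of occurrences of the pattern `q` (a permutation of length `k`)
in the permutation `p` (of length `n`): the number of strictly increasing index
sequences along which `p` is order-isomorphic to `q`. -/
def numOcc {k n : ℕ} (q : Equiv.Perm (Fin k)) (p : Equiv.Perm (Fin n)) : ℕ :=
  ((Finset.univ : Finset (Fin k → Fin n)).filter (fun f =>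
    (∀ i j : Fin k, i < j → f i < f j) ∧
    (∀ i j : Fin k, q i < q j ↔ p (f i) < p (f j)))).card

/-- `Av n q` : the set of permutations of length `n` avoiding the pattern `q`. -/
def Av (n : ℕ) {k : ℕ} (q : Equiv.Perm (Fin k)) : Finset (Equiv.Perm (Fin n)) :=
  Finset.univ.filter (fun p => numOcc q p = 0)

/-- Total number of occurrences of `q` over a finite set of permutations. -/
def nu {k n : ℕ} (q : Equiv.Perm (Fin k)) (C : Finset (Equiv.Perm (Fin n))) : ℕ :=
  ∑ p ∈ C, numOcc q p

noncomputable def p12 : Equiv.Perm (Fin 2) := Equiv.ofBijective ![0,1] (by decide)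
noncomputable def p21 : Equiv.Perm (Fin 2) := Equiv.ofBijective ![1,0] (by decide)
noncomputable def p123 : Equiv.Perm (Fin 3) := Equiv.ofBijective ![0,1,2] (by decide)
noncomputable def p132 : Equiv.Perm (Fin 3) := Equiv.ofBijective ![0,2,1] (by decide)
noncomputable def p213 : Equiv.Perm (Fin 3) := Equiv.ofBijective ![1,0,2] (by decide)
noncomputable def p231 : Equiv.Perm (Fin 3) := Equiv.ofBijective ![1,2,0] (by decide)
noncomputable def p312 : Equiv.Perm (Fin 3) := Equiv.ofBijective ![2,0,1] (by decide)
noncomputable def p321 : Equiv.Perm (Fin 3) := Equiv.ofBijective ![2,1,0] (by decide)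
noncomputable def p2413 : Equiv.Perm (Fin 4) := Equiv.ofBijective ![1,3,0,2] (by decide)

namespace Work

lemma p12_apply (i : Fin 2) : p12 i = i := by
  show (![0,1] : Fin 2 → Fin 2) i = i
  fin_cases i <;> rfl

lemma p123_apply (i : Fin 3) : p123 i = i := by
  show (![0,1,2] : Fin 3 → Fin 3) i = i
  fin_cases i <;> rfl

/-- first `t` entries of `p` strictly decreasing -/
def DecrUpTo {n : ℕ} (p : Equiv.Perm (Fin n)) (t : ℕ) : Prop :=
  ∀ j k : Fin n, j < k → (k : ℕ) < t → p k < p j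

instance {n : ℕ} (p : Equiv.Perm (Fin n)) (t : ℕ) : Decidable (DecrUpTo p t) := by
  unfold DecrUpTo; infer_instance

lemma decrUpTo_one {n : ℕ} (p : Equiv.Perm (Fin n)) : DecrUpTo p 1 := by
  intro j k hjk hk
  have : (j : ℕ) < (k : ℕ) := hjk
  omega

lemma DecrUpTo.mono {n : ℕ} {p : Equiv.Perm (Fin n)} {s t : ℕ} (h : DecrUpTo p t)
    (hst : s ≤ t) : DecrUpTo p s := fun j k hjk hk => h j k hjk (lt_of_lt_of_le hk hst)


variable {n : ℕ}

/-- insert the maximal value at position `m` -/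
noncomputable def ins (m : Fin (n + 1)) (p : Equiv.Perm (Fin n)) : Equiv.Perm (Fin (n + 1)) :=
  (finSuccEquiv' m).trans ((p.optionCongr).trans (finSuccEquiv' (Fin.last n)).symm)

@[simp] lemma ins_apply_self (m : Fin (n + 1)) (p : Equiv.Perm (Fin n)) :
    ins m p m = Fin.last n := by
  simp [ins, finSuccEquiv'_at, finSuccEquiv'_symm_none]

@[simp] lemma ins_apply_succAbove (m : Fin (n + 1)) (p : Equiv.Perm (Fin n)) (y : Fin n) :
    ins m p (m.succAbove y) = (p y).castSucc := by
  simp [ins, finSuccEquiv'_succAbove, finSuccEquiv'_symm_some, Fin.succAbove_last]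

lemma ins_apply_ne (m : Fin (n + 1)) (p : Equiv.Perm (Fin n)) {x : Fin (n+1)} (hx : x ≠ m) :
    ins m p x ≠ Fin.last n := by
  obtain ⟨y, rfl⟩ := Fin.exists_succAbove_eq hx
  rw [ins_apply_succAbove]
  exact (Fin.castSucc_lt_last _).ne

lemma cond_iff {k : ℕ} (q : Equiv.Perm (Fin k)) (hq : ∀ i, q i = i)
    (p : Equiv.Perm (Fin n)) (f : Fin k → Fin n) :
    ((∀ i j : Fin k, i < j → f i < f j) ∧ (∀ i j : Fin k, q i < q j ↔ p (f i) < p (f j))) ↔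
      (StrictMono f ∧ StrictMono (fun i => p (f i))) := by
  constructor
  · rintro ⟨h1, h2⟩
    refine ⟨fun a b h => h1 a b h, fun a b h => ?_⟩
    have := (h2 a b).mp (by rw [hq, hq]; exact h)
    exact this
  · rintro ⟨h1, h2⟩
    refine ⟨fun i j h => h1 h, fun i j => ?_⟩
    rw [hq, hq]
    exact h2.lt_iff_lt.symm

lemma numOcc_eq_card (q : Equiv.Perm (Fin 2)) (hq : ∀ i, q i = i) (p : Equiv.Perm (Fin n)) :
    numOcc q p = ((Finset.univ : Finset (Fin n × Fin n)).filter
        (fun x => x.1 < x.2 ∧ p x.1 < p x.2)).card := by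
  unfold numOcc
  rw [Finset.filter_congr (fun f _ => by
    rw [cond_iff q hq p f, Fin.strictMono_iff_lt_succ, Fin.strictMono_iff_lt_succ,
      Fin.forall_fin_one, Fin.forall_fin_one])]
  apply Finset.card_nbij (fun f => (f 0, f 1))
  · intro f hf
    simp only [Finset.mem_coe, Finset.mem_filter, Finset.mem_univ, true_and] at hf ⊢
    exact hf
  · intro f hf g hg hfg
    simp only [Prod.mk.injEq] at hfg
    funext i
    fin_cases i
    · exact hfg.1
    · exact hfg.2
  · intro x hx
    simp only [Finset.coe_filter, Set.mem_setOf_eq, Finset.mem_univ, true_and] at hx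
    refine ⟨![x.1, x.2], ?_, rfl⟩
    simp only [Finset.coe_filter, Set.mem_setOf_eq, Finset.mem_univ, true_and]
    exact hx

lemma numOcc_p12_eq (p : Equiv.Perm (Fin n)) :
    numOcc p12 p = ((Finset.univ : Finset (Fin n × Fin n)).filter
        (fun x => x.1 < x.2 ∧ p x.1 < p x.2)).card :=
  numOcc_eq_card p12 p12_apply p

/-- Characterization of avoidance of 123. -/
lemma avoids123_iff (p : Equiv.Perm (Fin n)) :
    numOcc p123 p = 0 ↔
      ∀ a b c : Fin n, a < b → b < c → p a < p b → ¬ (p b < p c) := by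
  unfold numOcc
  rw [Finset.card_eq_zero, Finset.filter_eq_empty_iff]
  constructor
  · intro H a b c hab hbc hpab hpbc
    refine H (Finset.mem_univ ![a,b,c]) ?_
    rw [cond_iff p123 p123_apply]
    constructor
    · rw [Fin.strictMono_iff_lt_succ]
      intro i
      fin_cases i <;> [exact hab; exact hbc]
    · rw [Fin.strictMono_iff_lt_succ]
      intro i
      fin_cases i <;> [exact hpab; exact hpbc]
  · intro H f _ hf
    rw [cond_iff p123 p123_apply] at hf
    obtain ⟨h1, h2⟩ := hf
    exact H (f 0) (f 1) (f 2) (h1 (by decide)) (h1 (by decide))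
      (h2 (show (0:Fin 3) < 1 by decide)) (h2 (show (1:Fin 3) < 2 by decide))

lemma numOcc_p12_ins (m : Fin (n + 1)) (p : Equiv.Perm (Fin n)) :
    numOcc p12 (ins m p) = numOcc p12 p + (m : ℕ) := by
  rw [numOcc_p12_eq, numOcc_p12_eq]
  set q := ins m p with hq
  have hsplit := Finset.card_filter_add_card_filter_not
    (s := (Finset.univ : Finset (Fin (n+1) × Fin (n+1))).filter
      (fun x => x.1 < x.2 ∧ q x.1 < q x.2)) (p := fun x => x.2 = m)
  rw [Finset.filter_filter, Finset.filter_filter] at hsplit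
  have hA : ((Finset.univ : Finset (Fin (n+1) × Fin (n+1))).filter
      (fun x => (x.1 < x.2 ∧ q x.1 < q x.2) ∧ x.2 = m)).card = (m : ℕ) := by
    have heq : ((Finset.univ : Finset (Fin (n+1) × Fin (n+1))).filter
        (fun x => (x.1 < x.2 ∧ q x.1 < q x.2) ∧ x.2 = m)) =
        ((Finset.univ : Finset (Fin (n+1) × Fin (n+1))).filter
        (fun x => x.1 < m ∧ x.2 = m)) := by
      apply Finset.filter_congr
      intro x _
      constructor
      · rintro ⟨⟨h1, _⟩, h3⟩
        exact ⟨h3 ▸ h1, h3⟩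
      · rintro ⟨h1, h2⟩
        refine ⟨⟨h2 ▸ h1, ?_⟩, h2⟩
        rw [h2, ins_apply_self]
        exact Fin.lt_last_iff_ne_last.mpr (ins_apply_ne m p (ne_of_lt h1))
      done
    rw [heq]
    have hIio : (Finset.Iio m).card = (m : ℕ) := Fin.card_Iio m
    rw [← hIio]
    apply Finset.card_nbij (fun x => x.1)
    · intro x hx
      simp only [Finset.mem_coe, Finset.mem_filter, Finset.mem_univ, true_and] at hx
      simp only [Finset.mem_coe, Finset.mem_Iio]
      exact hx.1
    · intro x hx y hy hxy
      simp only [Finset.coe_filter, Set.mem_setOf_eq, Finset.mem_univ, true_and] at hx hy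
      exact Prod.ext hxy (hx.2.trans hy.2.symm)
    · intro a ha
      simp only [Finset.coe_Iio, Set.mem_Iio] at ha
      refine ⟨(a, m), ?_, rfl⟩
      simp only [Finset.coe_filter, Set.mem_setOf_eq, Finset.mem_univ, true_and]
      simpa using ha
  have hB : ((Finset.univ : Finset (Fin (n+1) × Fin (n+1))).filter
      (fun x => (x.1 < x.2 ∧ q x.1 < q x.2) ∧ ¬ x.2 = m)).card =
      ((Finset.univ : Finset (Fin n × Fin n)).filter
        (fun x => x.1 < x.2 ∧ p x.1 < p x.2)).card := by
    symm
    apply Finset.card_nbij (fun x => (m.succAbove x.1, m.succAbove x.2))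
    · intro x hx
      simp only [Finset.mem_coe, Finset.mem_filter, Finset.mem_univ, true_and] at hx ⊢
      refine ⟨⟨Fin.succAbove_lt_succAbove_iff.mpr hx.1, ?_⟩, Fin.succAbove_ne m x.2⟩
      rw [hq, ins_apply_succAbove, ins_apply_succAbove]
      exact Fin.castSucc_lt_castSucc_iff.mpr hx.2
    · intro x hx y hy hxy
      simp only [Prod.mk.injEq] at hxy
      exact Prod.ext (Fin.succAbove_right_injective hxy.1)
        (Fin.succAbove_right_injective hxy.2)
    · intro x hx
      simp only [Finset.coe_filter, Set.mem_setOf_eq, Finset.mem_univ, true_and] at hx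
      obtain ⟨⟨h1, h2⟩, h3⟩ := hx
      have hx1 : x.1 ≠ m := by
        intro hx1
        rw [hq, hx1, ins_apply_self] at h2
        exact not_lt.mpr (Fin.le_last (q x.2)) h2
      obtain ⟨a, ha⟩ := Fin.exists_succAbove_eq hx1
      obtain ⟨b, hb⟩ := Fin.exists_succAbove_eq h3
      refine ⟨(a, b), ?_, ?_⟩
      · simp only [Finset.coe_filter, Set.mem_setOf_eq, Finset.mem_univ, true_and]
        constructor
        · rw [← Fin.succAbove_lt_succAbove_iff (p := m), ha, hb]
          exact h1
        · rw [← Fin.castSucc_lt_castSucc_iff, ← ins_apply_succAbove m p,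
            ← ins_apply_succAbove m p, ha, hb]
          exact h2
      · show (m.succAbove a, m.succAbove b) = x
        rw [ha, hb]
    done
  omega

lemma perm_lt_of_not_lt {N : ℕ} (p : Equiv.Perm (Fin N)) {j k : Fin N} (hjk : j ≠ k)
    (h : ¬ p k < p j) : p j < p k :=
  lt_of_le_of_ne (not_lt.mp h) (fun he => hjk (p.injective he))

lemma avoids_ins_iff (m : Fin (n + 1)) (p : Equiv.Perm (Fin n)) :
    numOcc p123 (ins m p) = 0 ↔ numOcc p123 p = 0 ∧ DecrUpTo p (m : ℕ) := by
  rw [avoids123_iff, avoids123_iff]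
  constructor
  · intro H
    constructor
    · intro a b c hab hbc hpab hpbc
      refine H (m.succAbove a) (m.succAbove b) (m.succAbove c)
        (Fin.succAbove_lt_succAbove_iff.mpr hab)
        (Fin.succAbove_lt_succAbove_iff.mpr hbc) ?_ ?_
      · rw [ins_apply_succAbove, ins_apply_succAbove]
        exact Fin.castSucc_lt_castSucc_iff.mpr hpab
      · rw [ins_apply_succAbove, ins_apply_succAbove]
        exact Fin.castSucc_lt_castSucc_iff.mpr hpbc
    · intro j k hjk hk
      by_contra hno
      have hpjk : p j < p k := perm_lt_of_not_lt p (ne_of_lt hjk) hno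
      have hck : (k : Fin n).castSucc < m := by
        rw [Fin.lt_def]
        simpa using hk
      refine H (m.succAbove j) (m.succAbove k) m
        (Fin.succAbove_lt_succAbove_iff.mpr hjk) ?_ ?_ ?_
      · rw [Fin.succAbove_of_castSucc_lt _ _ hck]
        exact hck
      · rw [ins_apply_succAbove, ins_apply_succAbove]
        exact Fin.castSucc_lt_castSucc_iff.mpr hpjk
      · rw [ins_apply_succAbove, ins_apply_self]
        exact Fin.castSucc_lt_last _
  · rintro ⟨H1, H2⟩ a b c hab hbc hpab hpbc
    have ha : a ≠ m := by
      intro h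
      rw [h, ins_apply_self] at hpab
      exact not_lt.mpr (Fin.le_last _) hpab
    have hb : b ≠ m := by
      intro h
      rw [h, ins_apply_self] at hpbc
      exact not_lt.mpr (Fin.le_last _) hpbc
    obtain ⟨a', ha'⟩ := Fin.exists_succAbove_eq ha
    obtain ⟨b', hb'⟩ := Fin.exists_succAbove_eq hb
    by_cases hc : c = m
    · -- ascent before position m
      have hab' : a' < b' := by
        rw [← Fin.succAbove_lt_succAbove_iff (p := m), ha', hb']
        exact hab
      have hv : p a' < p b' := by
        rw [← Fin.castSucc_lt_castSucc_iff, ← ins_apply_succAbove m p,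
          ← ins_apply_succAbove m p, ha', hb']
        exact hpab
      have hbm : b'.castSucc < m := by
        by_contra hle
        push_neg at hle
        rw [Fin.succAbove_of_le_castSucc _ _ hle] at hb'
        have h1 : (m : ℕ) ≤ (b' : ℕ) := by exact hle
        have h2 : (b : ℕ) < (m : ℕ) := by rw [← hc]; exact hbc
        have h3 : (b : ℕ) = (b' : ℕ) + 1 := by rw [← hb']; simp
        omega
      have : (b' : ℕ) < (m : ℕ) := by simpa [Fin.lt_def] using hbm
      exact absurd hv (not_lt.mpr (le_of_lt (H2 a' b' hab' this)))
    · obtain ⟨c', hc'⟩ := Fin.exists_succAbove_eq hc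
      refine H1 a' b' c' ?_ ?_ ?_ ?_
      · rw [← Fin.succAbove_lt_succAbove_iff (p := m), ha', hb']; exact hab
      · rw [← Fin.succAbove_lt_succAbove_iff (p := m), hb', hc']; exact hbc
      · rw [← Fin.castSucc_lt_castSucc_iff, ← ins_apply_succAbove m p,
          ← ins_apply_succAbove m p, ha', hb']
        exact hpab
      · rw [← Fin.castSucc_lt_castSucc_iff, ← ins_apply_succAbove m p,
          ← ins_apply_succAbove m p, hb', hc']
        exact hpbc

lemma decrUpTo_ins_zero (p : Equiv.Perm (Fin n)) (t : ℕ) :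
    DecrUpTo (ins 0 p) (t + 1) ↔ DecrUpTo p t := by
  constructor
  · intro h j k hjk hk
    have := h ((0 : Fin (n+1)).succAbove j) ((0 : Fin (n+1)).succAbove k)
      (Fin.succAbove_lt_succAbove_iff.mpr hjk) ?_
    · rw [ins_apply_succAbove, ins_apply_succAbove] at this
      exact Fin.castSucc_lt_castSucc_iff.mp this
    · rw [Fin.succAbove_zero]
      simp only [Fin.val_succ]
      omega
  · intro h j k hjk hk
    have hk0 : k ≠ 0 := Fin.pos_iff_ne_zero.mp (lt_of_le_of_lt (Fin.zero_le j) hjk)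
    obtain ⟨k', hk'⟩ := Fin.exists_succAbove_eq hk0
    by_cases hj0 : j = 0
    · rw [hj0, ins_apply_self, ← hk', ins_apply_succAbove]
      exact Fin.castSucc_lt_last _
    · obtain ⟨j', hj'⟩ := Fin.exists_succAbove_eq hj0
      rw [← hj', ← hk', ins_apply_succAbove, ins_apply_succAbove,
        Fin.castSucc_lt_castSucc_iff]
      apply h
      · rw [← Fin.succAbove_lt_succAbove_iff (p := (0 : Fin (n+1))), hj', hk']
        exact hjk
      · have : ((0 : Fin (n+1)).succAbove k' : ℕ) = (k' : ℕ) + 1 := by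
          rw [Fin.succAbove_zero]; simp
        rw [hk'] at this
        omega
    done

lemma decrUpTo_ins_pos (m : Fin (n + 1)) (p : Equiv.Perm (Fin n)) (hm : m ≠ 0)
    (hp : DecrUpTo p (m : ℕ)) (t : ℕ) :
    DecrUpTo (ins m p) t ↔ t ≤ (m : ℕ) := by
  constructor
  · intro h
    by_contra hno
    push_neg at hno
    have hm1 : 1 ≤ (m : ℕ) := Fin.pos_iff_ne_zero.mpr hm
    have hmn : (m : ℕ) ≤ n := Fin.is_le m
    set j : Fin (n + 1) := Fin.castSucc ⟨(m : ℕ) - 1, by omega⟩ with hj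
    have hjm : j < m := by
      rw [Fin.lt_def]
      show (m : ℕ) - 1 < m
      omega
    have := h j m hjm (by omega)
    rw [ins_apply_self] at this
    exact not_lt.mpr (Fin.le_last _) this
  · intro ht j k hjk hk
    have hkm : k < m := by
      rw [Fin.lt_def]; omega
    have hjm : j < m := lt_trans hjk hkm
    obtain ⟨a, ha⟩ := Fin.exists_succAbove_eq (ne_of_lt hjm)
    obtain ⟨b, hb⟩ := Fin.exists_succAbove_eq (ne_of_lt hkm)
    have hca : a.castSucc < m := by
      by_contra hle
      push_neg at hle
      rw [Fin.succAbove_of_le_castSucc _ _ hle] at ha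
      have h1 : (m : ℕ) ≤ (a : ℕ) := by exact hle
      have h2 : (j : ℕ) = (a : ℕ) + 1 := by rw [← ha]; simp
      have h3 : (j : ℕ) < (m : ℕ) := hjm
      omega
    have hcb : b.castSucc < m := by
      by_contra hle
      push_neg at hle
      rw [Fin.succAbove_of_le_castSucc _ _ hle] at hb
      have h1 : (m : ℕ) ≤ (b : ℕ) := by exact hle
      have h2 : (k : ℕ) = (b : ℕ) + 1 := by rw [← hb]; simp
      have h3 : (k : ℕ) < (m : ℕ) := hkm
      omega
    have haj : (a : ℕ) = (j : ℕ) := by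
      rw [← ha, Fin.succAbove_of_castSucc_lt _ _ hca]; simp
    have hbk : (b : ℕ) = (k : ℕ) := by
      rw [← hb, Fin.succAbove_of_castSucc_lt _ _ hcb]; simp
    rw [← ha, ← hb, ins_apply_succAbove, ins_apply_succAbove,
      Fin.castSucc_lt_castSucc_iff]
    apply hp
    · rw [Fin.lt_def]; omega
    · omega

/-- delete the maximal value -/
noncomputable def del (p : Equiv.Perm (Fin (n + 1))) : Equiv.Perm (Fin n) :=
  Equiv.removeNone (((finSuccEquiv' (p.symm (Fin.last n))).symm.trans
    (p : Fin (n+1) ≃ Fin (n+1))).trans (finSuccEquiv' (Fin.last n)))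

lemma del_spec (p : Equiv.Perm (Fin (n + 1))) (y : Fin n) :
    (del p y).castSucc = p ((p.symm (Fin.last n)).succAbove y) := by
  set m := p.symm (Fin.last n) with hm
  set e := ((finSuccEquiv' m).symm.trans (p : Fin (n+1) ≃ Fin (n+1))).trans
    (finSuccEquiv' (Fin.last n)) with he
  have hz : p (m.succAbove y) ≠ Fin.last n := by
    intro h
    have : m.succAbove y = m := by
      apply p.injective
      rw [h, hm, Equiv.apply_symm_apply]
    exact Fin.succAbove_ne m y this
  have hlt : p (m.succAbove y) < Fin.last n := Fin.lt_last_iff_ne_last.mpr hz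
  have hsome : e (some y) = some ((p (m.succAbove y)).castPred hz) := by
    rw [he]
    simp only [Equiv.trans_apply, finSuccEquiv'_symm_some]
    show (finSuccEquiv' (Fin.last n)) (p (m.succAbove y)) = _
    have h3 : (finSuccEquiv' (Fin.last n)) (((p (m.succAbove y)).castPred hz).castSucc) =
        some ((p (m.succAbove y)).castPred hz) := finSuccEquiv'_last_apply_castSucc _
    rwa [Fin.castSucc_castPred] at h3
  have := Equiv.removeNone_some e ⟨_, hsome⟩
  rw [hsome] at this
  have h2 : (Equiv.removeNone e) y = (p (m.succAbove y)).castPred hz :=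
    Option.some_injective _ this
  show ((Equiv.removeNone e) y).castSucc = _
  rw [h2, Fin.castSucc_castPred]

lemma symm_ins_last (m : Fin (n + 1)) (p : Equiv.Perm (Fin n)) :
    (ins m p).symm (Fin.last n) = m := by
  rw [Equiv.symm_apply_eq, ins_apply_self]

lemma ins_del (p : Equiv.Perm (Fin (n + 1))) :
    ins (p.symm (Fin.last n)) (del p) = p := by
  set m := p.symm (Fin.last n) with hm
  apply Equiv.ext
  intro x
  by_cases hx : x = m
  · rw [hx, ins_apply_self, hm, Equiv.apply_symm_apply]
  · obtain ⟨y, rfl⟩ := Fin.exists_succAbove_eq hx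
    rw [ins_apply_succAbove, del_spec]

lemma del_ins (m : Fin (n + 1)) (p : Equiv.Perm (Fin n)) :
    del (ins m p) = p := by
  apply Equiv.ext
  intro y
  apply Fin.castSucc_injective
  rw [del_spec, symm_ins_last, ins_apply_succAbove]

/-- master bijection: summing over `Av (n+1)` equals summing over pairs. -/
lemma master (g : Equiv.Perm (Fin (n + 1)) → ℕ) :
    ∑ p ∈ Av (n + 1) p123, g p =
      ∑ x ∈ (Av n p123).sigma
        (fun p' => Finset.univ.filter (fun m : Fin (n + 1) => DecrUpTo p' (m : ℕ))),
        g (ins x.2 x.1) := by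
  symm
  apply Finset.sum_nbij' (i := fun x => ins x.2 x.1)
    (j := fun p => ⟨del p, p.symm (Fin.last n)⟩)
  · intro x hx
    rw [Finset.mem_sigma] at hx
    obtain ⟨h1, h2⟩ := hx
    simp only [Av, Finset.mem_filter, Finset.mem_univ, true_and] at h1 h2 ⊢
    exact (avoids_ins_iff x.2 x.1).mpr ⟨h1, h2⟩
  · intro p hp
    simp only [Av, Finset.mem_filter, Finset.mem_univ, true_and] at hp
    rw [Finset.mem_sigma]
    have hrw : numOcc p123 (ins (p.symm (Fin.last n)) (del p)) = 0 := by
      rw [ins_del]; exact hp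
    rw [avoids_ins_iff] at hrw
    constructor
    · simp only [Av, Finset.mem_filter, Finset.mem_univ, true_and]
      exact hrw.1
    · simp only [Finset.mem_filter, Finset.mem_univ, true_and]
      exact hrw.2
  · intro x hx
    obtain ⟨p', m⟩ := x
    show (⟨del (ins m p'), (ins m p').symm (Fin.last n)⟩ :
      Σ _ : Equiv.Perm (Fin n), Fin (n + 1)) = _
    rw [del_ins, symm_ins_last]
  · intro p hp
    show ins (p.symm (Fin.last n)) (del p) = p
    exact ins_del p
  · intro x hx
    rfl

lemma decrUpTo_zero (p : Equiv.Perm (Fin n)) : DecrUpTo p 0 := by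
  intro j k hjk hk
  omega

lemma inner_sum (u : ℕ → ℕ) (t : ℕ) (ht1 : 1 ≤ t) (htn : t ≤ n) (p' : Equiv.Perm (Fin n)) :
    (∑ m ∈ (Finset.univ : Finset (Fin (n + 1))),
      if DecrUpTo p' (m : ℕ) then
        (if DecrUpTo (ins m p') t ∧ ¬ DecrUpTo (ins m p') (t + 1) then
          u (numOcc p12 (ins m p')) else 0) else 0)
    = (if DecrUpTo p' (t - 1) ∧ ¬ DecrUpTo p' t then u (numOcc p12 p') else 0)
      + (if DecrUpTo p' t then u (numOcc p12 p' + t) else 0) := by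
  set mt : Fin (n + 1) := ⟨t, by omega⟩ with hmt
  have h0mt : (0 : Fin (n + 1)) ≠ mt := by
    intro h
    have : (0 : ℕ) = t := congrArg Fin.val h
    omega
  rw [← Finset.sum_subset (Finset.subset_univ ({0, mt} : Finset (Fin (n + 1)))) ?hzero]
  · rw [Finset.sum_pair h0mt]
    congr 1
    · -- value at 0
      have hd0 : DecrUpTo p' ((0 : Fin (n + 1)) : ℕ) := by
        rw [Fin.val_zero]; exact decrUpTo_zero p'
      rw [if_pos hd0]
      have e1 : DecrUpTo (ins 0 p') t ↔ DecrUpTo p' (t - 1) := by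
        conv_lhs => rw [show t = (t - 1) + 1 by omega]
        exact decrUpTo_ins_zero p' (t - 1)
      have e2 : DecrUpTo (ins 0 p') (t + 1) ↔ DecrUpTo p' t := decrUpTo_ins_zero p' t
      have e3 : numOcc p12 (ins 0 p') = numOcc p12 p' := by
        rw [numOcc_p12_ins, Fin.val_zero, add_zero]
      rw [e3]
      by_cases h1 : DecrUpTo p' (t - 1) <;> by_cases h2 : DecrUpTo p' t <;>
        simp [e1, e2, h1, h2]
    · -- value at mt
      have hvmt : (mt : ℕ) = t := rfl
      by_cases hd : DecrUpTo p' t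
      · rw [if_pos (hvmt ▸ hd), if_pos hd]
        have hmt0 : mt ≠ 0 := fun h => h0mt h.symm
        have e1 : DecrUpTo (ins mt p') t ↔ t ≤ (mt : ℕ) :=
          decrUpTo_ins_pos mt p' hmt0 (hvmt ▸ hd) t
        have e2 : DecrUpTo (ins mt p') (t + 1) ↔ t + 1 ≤ (mt : ℕ) :=
          decrUpTo_ins_pos mt p' hmt0 (hvmt ▸ hd) (t + 1)
        rw [if_pos ⟨e1.mpr (by omega), fun hc => by have := e2.mp hc; omega⟩]
        rw [numOcc_p12_ins, hvmt]
      · rw [if_neg (fun hc => hd (hvmt ▸ hc)), if_neg hd]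
  · intro x _ hx
    simp only [Finset.mem_insert, Finset.mem_singleton, not_or] at hx
    obtain ⟨hx0, hxt⟩ := hx
    by_cases hd : DecrUpTo p' (x : ℕ)
    · rw [if_pos hd]
      have e1 : DecrUpTo (ins x p') t ↔ t ≤ (x : ℕ) := decrUpTo_ins_pos x p' hx0 hd t
      have e2 : DecrUpTo (ins x p') (t + 1) ↔ t + 1 ≤ (x : ℕ) :=
        decrUpTo_ins_pos x p' hx0 hd (t + 1)
      rw [if_neg]
      rintro ⟨hc1, hc2⟩
      have h1 := e1.mp hc1
      have h2 : ¬ (t + 1 ≤ (x : ℕ)) := fun hc => hc2 (e2.mpr hc)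
      have : (x : ℕ) = t := by omega
      exact hxt (Fin.ext this)
    · rw [if_neg hd]

/-- the main recursion step, summed form -/
lemma key (u : ℕ → ℕ) (t : ℕ) (ht1 : 1 ≤ t) (htn : t ≤ n) :
    ∑ p ∈ (Av (n + 1) p123).filter (fun p => DecrUpTo p t ∧ ¬ DecrUpTo p (t + 1)),
      u (numOcc p12 p)
    = (∑ p' ∈ (Av n p123).filter (fun p' => DecrUpTo p' (t - 1) ∧ ¬ DecrUpTo p' t),
        u (numOcc p12 p'))
      + ∑ p' ∈ (Av n p123).filter (fun p' => DecrUpTo p' t), u (numOcc p12 p' + t) := by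
  rw [Finset.sum_filter, Finset.sum_filter, Finset.sum_filter,
    master (fun p => if DecrUpTo p t ∧ ¬ DecrUpTo p (t + 1) then u (numOcc p12 p) else 0),
    Finset.sum_sigma, ← Finset.sum_add_distrib]
  apply Finset.sum_congr rfl
  intro p' _
  rw [Finset.sum_filter]
  exact inner_sum u t ht1 htn p'

/-- number of 123-avoiders with first `t` entries decreasing -/
noncomputable def Ah (n t : ℕ) : ℕ :=
  ∑ p ∈ (Av n p123).filter (fun p => DecrUpTo p t), 1

/-- total 12-occurrences over 123-avoiders with first `t` entries decreasing -/
noncomputable def Bh (n t : ℕ) : ℕ :=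
  ∑ p ∈ (Av n p123).filter (fun p => DecrUpTo p t), numOcc p12 p

/-- generic weighted count -/
noncomputable def Wh (n t : ℕ) (u : ℕ → ℕ) : ℕ :=
  ∑ p ∈ (Av n p123).filter (fun p => DecrUpTo p t), u (numOcc p12 p)

lemma split (N t : ℕ) (u : ℕ → ℕ) :
    Wh N t u = Wh N (t + 1) u +
      ∑ p ∈ (Av N p123).filter (fun p => DecrUpTo p t ∧ ¬ DecrUpTo p (t + 1)),
        u (numOcc p12 p) := by
  unfold Wh
  rw [← Finset.sum_filter_add_sum_filter_not
    ((Av N p123).filter (fun p => DecrUpTo p t)) (fun p => DecrUpTo p (t + 1))]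
  congr 1
  · apply Finset.sum_congr _ (fun _ _ => rfl)
    rw [Finset.filter_filter]
    apply Finset.filter_congr
    intro p _
    constructor
    · exact fun h => h.2
    · exact fun h => ⟨h.mono (by omega), h⟩
  · apply Finset.sum_congr _ (fun _ _ => rfl)
    rw [Finset.filter_filter]

/-- the final combinatorial recurrence -/
lemma fcr (u : ℕ → ℕ) (t : ℕ) (ht1 : 1 ≤ t) (htn : t ≤ n) :
    Wh (n + 1) t u + Wh n t u
      = Wh (n + 1) (t + 1) u + Wh n (t - 1) u
        + ∑ p ∈ (Av n p123).filter (fun p => DecrUpTo p t), u (numOcc p12 p + t) := by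
  have e1 := split (n + 1) t u
  have e2 := key u t ht1 htn
  have e3 := split n (t - 1) u
  rw [show t - 1 + 1 = t by omega] at e3
  omega

lemma Ah_rec (t : ℕ) (ht1 : 1 ≤ t) (htn : t ≤ n) :
    Ah (n + 1) t = Ah (n + 1) (t + 1) + Ah n (t - 1) := by
  have := fcr (n := n) (fun _ => 1) t ht1 htn
  show Wh (n+1) t (fun _ => 1) = Wh (n+1) (t+1) (fun _ => 1) + Wh n (t-1) (fun _ => 1)
  have hws : Wh n t (fun _ => 1) =
      ∑ p ∈ (Av n p123).filter (fun p => DecrUpTo p t), 1 := rfl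
  omega

lemma Bh_rec (t : ℕ) (ht1 : 1 ≤ t) (htn : t ≤ n) :
    Bh (n + 1) t = Bh (n + 1) (t + 1) + Bh n (t - 1) + t * Ah n t := by
  have h := fcr (n := n) id t ht1 htn
  have hz : ∑ p ∈ (Av n p123).filter (fun p => DecrUpTo p t), id (numOcc p12 p + t)
      = Bh n t + t * Ah n t := by
    unfold Bh Ah
    rw [Finset.mul_sum, ← Finset.sum_add_distrib]
    apply Finset.sum_congr rfl
    intro p _
    simp
  have hb1 : Wh (n+1) t id = Bh (n+1) t := rfl
  have hb2 : Wh (n+1) (t+1) id = Bh (n+1) (t+1) := rfl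
  have hb3 : Wh n (t-1) id = Bh n (t-1) := rfl
  have hb4 : Wh n t id = Bh n t := rfl
  omega

lemma numOcc_p12_eq_zero_of_decr {N : ℕ} (p : Equiv.Perm (Fin N)) (h : DecrUpTo p N) :
    numOcc p12 p = 0 := by
  rw [numOcc_p12_eq, Finset.card_eq_zero, Finset.filter_eq_empty_iff]
  rintro x _ ⟨h1, h2⟩
  exact absurd h2 (asymm (h x.1 x.2 h1 x.2.isLt))

lemma Bh_top (N : ℕ) : Bh N N = 0 := by
  unfold Bh
  apply Finset.sum_eq_zero
  intro p hp
  rw [Finset.mem_filter] at hp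
  exact numOcc_p12_eq_zero_of_decr p hp.2

lemma decr_unique {N : ℕ} (p : Equiv.Perm (Fin N)) (h : DecrUpTo p N) : p = Fin.revPerm := by
  have hsm : StrictMono (Fin.revPerm.trans p : Fin N ≃ Fin N) := by
    intro a b hab
    show p (Fin.rev a) < p (Fin.rev b)
    exact h (Fin.rev b) (Fin.rev a) (Fin.rev_lt_rev.mpr hab) (Fin.rev a).isLt
  let oi : Fin N ≃o Fin N := { toEquiv := Fin.revPerm.trans p, map_rel_iff' := hsm.le_iff_le }
  have hoi : oi = OrderIso.refl (Fin N) := Subsingleton.elim _ _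
  have heq : (Fin.revPerm.trans p : Fin N ≃ Fin N) = Equiv.refl (Fin N) :=
    congrArg (fun (e : Fin N ≃o Fin N) => e.toEquiv) hoi
  calc p = Fin.revPerm.symm.trans (Fin.revPerm.trans p) := by
        rw [← Equiv.trans_assoc, Equiv.symm_trans_self, Equiv.refl_trans]
    _ = Fin.revPerm.symm.trans (Equiv.refl (Fin N)) := by rw [heq]
    _ = Fin.revPerm := by rw [Equiv.trans_refl, Fin.revPerm_symm]

lemma revPerm_decr (N : ℕ) : DecrUpTo (Fin.revPerm : Equiv.Perm (Fin N)) N := by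
  intro j k hjk _
  show Fin.rev k < Fin.rev j
  exact Fin.rev_lt_rev.mpr hjk

lemma Ah_top (N : ℕ) : Ah N N = 1 := by
  unfold Ah
  have hset : (Av N p123).filter (fun p => DecrUpTo p N) = {Fin.revPerm} := by
    ext p
    rw [Finset.mem_filter, Finset.mem_singleton]
    constructor
    · rintro ⟨_, hdec⟩
      exact decr_unique p hdec
    · rintro rfl
      refine ⟨?_, revPerm_decr N⟩
      simp only [Av, Finset.mem_filter, Finset.mem_univ, true_and]
      rw [avoids123_iff]
      intro a b c hab _ hpab _
      exact absurd (Fin.rev_lt_rev.mp hpab) (asymm hab)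
  rw [hset, Finset.sum_singleton]

/-- tail sum of a binomial row -/
def V (M a : ℕ) : ℕ := ∑ k ∈ Finset.Icc a M, M.choose k

lemma V_eq_zero {M a : ℕ} (h : M < a) : V M a = 0 := by
  unfold V
  rw [Finset.Icc_eq_empty (by omega), Finset.sum_empty]

lemma V_unfold (M a : ℕ) : V M a = M.choose a + V M (a + 1) := by
  by_cases h : a ≤ M
  · unfold V
    rw [show Finset.Icc a M = insert a (Finset.Icc (a+1) M) by
      ext x; simp only [Finset.mem_Icc, Finset.mem_insert]; omega]
    rw [Finset.sum_insert (by simp)]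
  · rw [V_eq_zero (by omega), V_eq_zero (by omega), Nat.choose_eq_zero_of_lt (by omega)]

lemma V_pascal (M a : ℕ) (ha : 1 ≤ a) : V (M + 1) a = V M a + V M (a - 1) := by
  obtain ⟨b, rfl⟩ : ∃ b, a = b + 1 := ⟨a - 1, by omega⟩
  simp only [Nat.add_sub_cancel]
  by_cases hbM : b ≤ M
  · unfold V
    have h1 : ∀ k ∈ Finset.Icc (b + 1) (M + 1), (M + 1).choose k
        = M.choose (k - 1) + M.choose k := by
      intro k hk
      rw [Finset.mem_Icc] at hk
      obtain ⟨c, rfl⟩ : ∃ c, k = c + 1 := ⟨k - 1, by omega⟩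
      rw [Nat.choose_succ_succ]
      simp
    have e1 : ∑ k ∈ Finset.Icc (b+1) (M+1), M.choose (k - 1)
        = ∑ k ∈ Finset.Icc b M, M.choose k := by
      apply Finset.sum_nbij' (i := fun k => k - 1) (j := fun k => k + 1)
      case hi => intro k hk; simp only [Finset.mem_Icc] at hk ⊢; omega
      case hj => intro k hk; simp only [Finset.mem_Icc] at hk ⊢; omega
      case left_neg => intro k hk; simp only [Finset.mem_Icc] at hk; show k - 1 + 1 = k; omega
      case right_neg => intro k hk; simp only [Finset.mem_Icc] at hk; show k + 1 - 1 = k; omega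
      case h => intro k hk; rfl
    have e2 : ∑ k ∈ Finset.Icc (b+1) (M+1), M.choose k
        = ∑ k ∈ Finset.Icc (b+1) M, M.choose k := by
      rw [Finset.sum_Icc_succ_top (by omega), Nat.choose_eq_zero_of_lt (by omega), add_zero]
    rw [Finset.sum_congr rfl h1, Finset.sum_add_distrib, e1, e2, add_comm]
  · rw [V_eq_zero (by omega), V_eq_zero (by omega), V_eq_zero (by omega)]

lemma Ah_zero_eq (N : ℕ) : Ah N 0 = Ah N 1 := by
  unfold Ah
  congr 1
  apply Finset.filter_congr
  intro p _
  simp only [iff_true_intro (decrUpTo_zero p), iff_true_intro (decrUpTo_one p)]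

lemma Bh_zero_eq (N : ℕ) : Bh N 0 = Bh N 1 := by
  unfold Bh
  apply Finset.sum_congr _ (fun _ _ => rfl)
  apply Finset.filter_congr
  intro p _
  simp only [iff_true_intro (decrUpTo_zero p), iff_true_intro (decrUpTo_one p)]

lemma choose_two_succ (t : ℕ) : (t + 1).choose 2 = t.choose 2 + t := by
  rw [Nat.choose_succ_succ, Nat.choose_one_right, add_comm]

/-- the closed forms, by induction -/
theorem closed : ∀ n, 1 ≤ n → ∀ t, t ≤ n →
    (Ah n t + (2 * n - t).choose (n + 1) = (2 * n - t).choose n) ∧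
    (Bh n t + (2 * n - t - 1).choose n
      = t.choose 2 * (2 * n - t - 1).choose n + (t + 1) * V (2 * n - t - 1) n) := by
  intro n hn
  induction n, hn using Nat.le_induction with
  | base =>
    intro t ht
    interval_cases t
    · constructor
      · rw [Ah_zero_eq]
        have h1 : Ah 1 1 = 1 := Ah_top 1
        have h2 : (2 * 1 - 0 : ℕ) = 2 := rfl
        rw [h2, h1]
        decide
      · rw [Bh_zero_eq]
        have h1 : Bh 1 1 = 0 := Bh_top 1
        rw [h1]
        show (0 : ℕ) + Nat.choose 1 1 = Nat.choose 0 2 * Nat.choose 1 1 + 1 * V 1 1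
        rw [V_unfold, V_eq_zero (by omega)]
        decide
    · constructor
      · have h1 : Ah 1 1 = 1 := Ah_top 1
        rw [h1]
        rfl
      · have h1 : Bh 1 1 = 0 := Bh_top 1
        rw [h1]
        show (0 : ℕ) + Nat.choose 0 1 = Nat.choose 1 2 * Nat.choose 0 1 + 2 * V 0 1
        rw [V_eq_zero (by omega)]
        rfl
  | succ n hn ih =>
    have step : ∀ d t, t + d = n + 1 → 
        (Ah (n+1) t + (2 * (n+1) - t).choose ((n+1) + 1) = (2 * (n+1) - t).choose (n+1)) ∧
        (Bh (n+1) t + (2 * (n+1) - t - 1).choose (n+1)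
          = t.choose 2 * (2 * (n+1) - t - 1).choose (n+1)
            + (t + 1) * V (2 * (n+1) - t - 1) (n+1)) := by
      intro d
      induction d with
      | zero =>
        intro t ht
        have htt : t = n + 1 := by omega
        subst htt
        have r1 : 2 * (n + 1) - (n + 1) = n + 1 := by omega
        have r2 : 2 * (n + 1) - (n + 1) - 1 = n := by omega
        rw [r2, r1]
        constructor
        · rw [Ah_top, Nat.choose_eq_zero_of_lt (by omega), Nat.choose_self]
        · rw [Bh_top, Nat.choose_eq_zero_of_lt (by omega), V_eq_zero (by omega)]
          simp
      | succ d ihd =>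
        intro t ht
        have ht' : t ≤ n := by omega
        have IHd := ihd (t + 1) (by omega)
        by_cases ht0 : t = 0
        · subst ht0
          obtain ⟨ihA1, ihB1⟩ := IHd
          have r1 : 2 * (n + 1) - 1 = 2 * n + 1 := by omega
          have r2 : 2 * (n + 1) - 1 - 1 = 2 * n := by omega
          have r3 : 2 * (n + 1) - 0 = 2 * n + 2 := by omega
          have r4 : 2 * (n + 1) - 0 - 1 = 2 * n + 1 := by omega
          simp only [Nat.zero_add] at ihA1 ihB1
          rw [r1] at ihA1
          rw [r2] at ihB1
          rw [r4, r3]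
          constructor
          · rw [Ah_zero_eq]
            have hp1 : (2 * n + 2).choose (n + 2) = (2 * n + 1).choose (n + 1)
                + (2 * n + 1).choose (n + 2) := Nat.choose_succ_succ _ _
            have hp2 : (2 * n + 2).choose (n + 1) = (2 * n + 1).choose n
                + (2 * n + 1).choose (n + 1) := Nat.choose_succ_succ _ _
            have hsym : (2 * n + 1).choose n = (2 * n + 1).choose (n + 1) := by
              have := Nat.choose_symm (n := 2 * n + 1) (k := n + 1) (by omega)
              rw [show 2 * n + 1 - (n + 1) = n by omega] at this
              exact this
            rw [show n + 1 + 1 = n + 2 by omega] at ihA1 ⊢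
            omega
          · rw [Bh_zero_eq]
            have hV1 : V (2 * n + 1) (n + 1) = V (2 * n) (n + 1) + V (2 * n) n := by
              have := V_pascal (2 * n) (n + 1) (by omega)
              simpa using this
            have hV2 : V (2 * n) n = (2 * n).choose n + V (2 * n) (n + 1) := V_unfold _ _
            have hp : (2 * n + 1).choose (n + 1) = (2 * n).choose n
                + (2 * n).choose (n + 1) := Nat.choose_succ_succ _ _
            -- goal : Bh (n+1) 1 + C(2n+1, n+1) = 0 * _ + 1 * V (2n+1) (n+1)
            have hsymB : (2 * n).choose n = (2 * n).choose n := rfl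
            -- from ihB1 : Bh (n+1) 1 + C(2n, n+1) = C(1,2) * C(2n,n+1) + 2 * V(2n, n+1)
            have hc12 : Nat.choose 1 2 = 0 := by decide
            rw [hc12] at ihB1
            have hc02 : Nat.choose 0 2 = 0 := by decide
            rw [hc02]
            omega
        · -- 1 ≤ t ≤ n
          have ht1 : 1 ≤ t := by omega
          set M := 2 * n - t with hM
          obtain ⟨ihA1, ihB1⟩ := IHd
          obtain ⟨ihA2, ihB2⟩ := ih (t - 1) (by omega)
          obtain ⟨ihA3, _⟩ := ih t ht'
          have r1 : 2 * (n + 1) - (t + 1) = M + 1 := by omega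
          have r2 : 2 * (n + 1) - (t + 1) - 1 = M := by omega
          have r3 : 2 * (n + 1) - t = M + 2 := by omega
          have r4 : 2 * (n + 1) - t - 1 = M + 1 := by omega
          have r5 : 2 * n - (t - 1) = M + 1 := by omega
          have r6 : 2 * n - (t - 1) - 1 = M := by omega
          rw [r1] at ihA1
          rw [r2] at ihB1
          rw [r5] at ihA2
          rw [r6] at ihB2
          rw [r4, r3]
          constructor
          · -- A-step
            have hRec := Ah_rec (n := n) t ht1 ht'
            have hp1 : (M + 2).choose (n + 2) = (M + 1).choose (n + 1)
                + (M + 1).choose (n + 2) := Nat.choose_succ_succ _ _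
            have hp2 : (M + 2).choose (n + 1) = (M + 1).choose n
                + (M + 1).choose (n + 1) := Nat.choose_succ_succ _ _
            rw [show n + 1 + 1 = n + 2 by omega] at ihA1 ⊢
            omega
          · -- B-step
            have hR := Bh_rec (n := n) t ht1 ht'
            have hI3 := ihA3
            have hP : (M + 1).choose (n + 1) = M.choose n + M.choose (n + 1) :=
              Nat.choose_succ_succ _ _
            have hQ : V (M + 1) (n + 1) = V M (n + 1) + V M n := by
              have := V_pascal M (n + 1) (by omega)
              simpa using this
            have hU : V M n = M.choose n + V M (n + 1) := V_unfold _ _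
            have hC1 : (t + 1).choose 2 = t.choose 2 + t := choose_two_succ t
            have hC2 : t.choose 2 = (t - 1).choose 2 + (t - 1) := by
              have := choose_two_succ (t - 1)
              rw [show t - 1 + 1 = t by omega] at this
              exact this
            -- also need the (t-1)+1 coefficient in ihB2 : it reads ((t-1)+1) * V M n
            have htm : t - 1 + 1 = t := by omega
            rw [htm] at ihB2
            zify at hR ihB1 ihB2 hI3 hP hQ hU hC1 hC2 ⊢
            rw [show ((t - 1 : ℕ) : ℤ) = (t : ℤ) - 1 by omega] at hC2
            linear_combination hR + ihB1 + ihB2 + (t : ℤ) * hI3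
              + (1 - (t.choose 2 : ℤ)) * hP + ((M.choose (n+1) : ℤ)) * hC1
              - ((M.choose n : ℤ)) * hC2 - ((t : ℤ) + 1) * hQ - hU
    intro t ht
    exact step (n + 1 - t) t (by omega)

lemma half_row (m : ℕ) : 2 * V (2 * m) (m + 1) + (2 * m).choose m = 4 ^ m := by
  have hrow : ∑ k ∈ Finset.range (2 * m + 1), (2 * m).choose k = 4 ^ m := by
    rw [Nat.sum_range_choose]
    rw [show (4 : ℕ) = 2 ^ 2 by norm_num, ← pow_mul]
  have hsplit : (∑ k ∈ Finset.Ico 0 (m + 1), (2 * m).choose k)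
      + ∑ k ∈ Finset.Ico (m + 1) (2 * m + 1), (2 * m).choose k
      = ∑ k ∈ Finset.range (2 * m + 1), (2 * m).choose k := by
    rw [Finset.range_eq_Ico]
    exact Finset.sum_Ico_consecutive _ (by omega) (by omega)
  have h2 : ∑ k ∈ Finset.Ico (m + 1) (2 * m + 1), (2 * m).choose k = V (2 * m) (m + 1) := by
    unfold V
    rw [Finset.Ico_add_one_right_eq_Icc]
  have h1 : ∑ k ∈ Finset.Ico 0 (m + 1), (2 * m).choose k
      = ∑ k ∈ Finset.Icc m (2 * m), (2 * m).choose k := by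
    apply Finset.sum_nbij' (i := fun k => 2 * m - k) (j := fun k => 2 * m - k)
    case hi => intro k hk; simp only [Finset.mem_Ico, Finset.mem_Icc] at hk ⊢; omega
    case hj => intro k hk; simp only [Finset.mem_Ico, Finset.mem_Icc] at hk ⊢; omega
    case left_neg => intro k hk; simp only [Finset.mem_Ico] at hk; show 2*m - (2*m - k) = k; omega
    case right_neg => intro k hk; simp only [Finset.mem_Icc] at hk; show 2*m - (2*m - k) = k; omega
    case h =>
      intro k hk
      simp only [Finset.mem_Ico] at hk
      show (2 * m).choose k = (2 * m).choose (2 * m - k)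
      rw [Nat.choose_symm (by omega)]
  have h3 : ∑ k ∈ Finset.Icc m (2 * m), (2 * m).choose k = V (2 * m) m := rfl
  have h4 : V (2 * m) m = (2 * m).choose m + V (2 * m) (m + 1) := V_unfold _ _
  omega

theorem final (n : ℕ) (hn : 1 ≤ n) :
    nu p12 (Av n p123) + Nat.choose (2 * n - 1) n = 4 ^ (n - 1) := by
  have h1 : nu p12 (Av n p123) = Bh n 1 := by
    unfold nu Bh
    rw [Finset.filter_true_of_mem (fun p _ => decrUpTo_one p)]
  obtain ⟨_, hB⟩ := closed n hn 1 hn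
  obtain ⟨m, rfl⟩ : ∃ m, n = m + 1 := ⟨n - 1, by omega⟩
  have r1 : 2 * (m + 1) - 1 - 1 = 2 * m := by omega
  rw [r1] at hB
  rw [show Nat.choose 1 2 = 0 by decide, zero_mul, zero_add] at hB
  have hhr := half_row m
  have hpas : (2 * (m + 1) - 1).choose (m + 1)
      = (2 * m).choose m + (2 * m).choose (m + 1) := by
    rw [show 2 * (m + 1) - 1 = 2 * m + 1 by omega]
    exact Nat.choose_succ_succ _ _
  have hsimp : m + 1 - 1 = m := by omega
  rw [h1, hsimp]
  omega

end Work

/-- For `n ≥ 1`, `ν_12(Av_n(123)) = 4^(n-1) - binom(2n-1, n)`. -/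
theorem stmt_4 (n : ℕ) (hn : 1 ≤ n) :
    nu p12 (Av n p123) + Nat.choose (2 * n - 1) n = 4 ^ (n - 1) :=
  Work.final n hn
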